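/- Let φ: Div^0(P^1(Q)) → V_g(O) be a Γ_0(N)-invariant modular symbol (p ∤ N) that is a T_p-eigensymbol with eigenvalue λ, takes all its values in Fil^r(V_g(O)), additionally satisfies φ|[[0,-1],[N,0]] = u·φ for some u ∈ O^×·N^{g/2} (functional equation), and has ||φ|| = 1 (all values have coefficients in O, some coefficient a unit). Then ord_p(λ) ≥ r. -/

import Mathlib

open MvPolynomial

/-- The right action of an integral 2×2 matrix `γ = [[a,b],[c,d]]` on polynomials in
`X = X 0`, `Y = X 1`: `(P|γ)(X,Y) = P(dX - cY, -bX + aY)`. -/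
noncomputable def matAct {R : Type*} [CommRing R] (γ : Matrix (Fin 2) (Fin 2) ℤ)
    (P : MvPolynomial (Fin 2) R) : MvPolynomial (Fin 2) R :=
  MvPolynomial.aeval
    ![γ 1 1 • MvPolynomial.X 0 - γ 1 0 • MvPolynomial.X 1,
      -(γ 0 1 • MvPolynomial.X 0) + γ 0 0 • MvPolynomial.X 1] P

/-- The action of an integral 2×2 matrix on `P^1(ℚ)` (modelled as `Option ℚ`,
with `none = ∞`) by fractional linear transformations. -/
noncomputable def moeb (γ : Matrix (Fin 2) (Fin 2) ℤ) : Option ℚ → Option ℚ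
  | none => if γ 1 0 = 0 then none else some ((γ 0 0 : ℚ) / (γ 1 0 : ℚ))
  | some q => if (γ 1 0 : ℚ) * q + (γ 1 1 : ℚ) = 0 then none
      else some (((γ 0 0 : ℚ) * q + (γ 0 1 : ℚ)) / ((γ 1 0 : ℚ) * q + (γ 1 1 : ℚ)))

/-- The degree of a divisor on `P^1(ℚ)`. -/
noncomputable def degDiv (D : Option ℚ →₀ ℤ) : ℤ := D.sum fun _ n => n

/-- Membership in `Fil^r(V_g(O))`. -/
def inFil (O : Type*) [CommRing O] (p g r : ℕ) (P : MvPolynomial (Fin 2) O) : Prop :=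
  ∀ j < r, (p : O) ^ (r - j) ∣
    MvPolynomial.coeff (Finsupp.single (0 : Fin 2) j + Finsupp.single (1 : Fin 2) (g - j)) P

section Aux

variable {O : Type*} [CommRing O]

lemma fin2_eq (d : Fin 2 →₀ ℕ) : d = Finsupp.single 0 (d 0) + Finsupp.single 1 (d 1) := by
  ext i
  fin_cases i <;> simp

lemma degree_fin2 (d : Fin 2 →₀ ℕ) : d.degree = d 0 + d 1 := by
  rw [Finsupp.degree, ← Fin.sum_univ_two (fun i => d i)]
  exact Finset.sum_subset (Finset.subset_univ _)
    (fun x _ hx => Finsupp.notMem_support_iff.mp hx)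

lemma monomial_fin2 (d : Fin 2 →₀ ℕ) (c : O) :
    (monomial d c : MvPolynomial (Fin 2) O) = C c * X 0 ^ (d 0) * X 1 ^ (d 1) := by
  rw [X_pow_eq_monomial, X_pow_eq_monomial, C_apply, monomial_mul, monomial_mul,
    mul_one, mul_one, zero_add, ← fin2_eq d]

lemma coeff_aeval_core (z : ℤ) (i : Fin 2) (Q : MvPolynomial (Fin 2) O)
    (d : Fin 2 →₀ ℕ) (c : O) (m : Fin 2 →₀ ℕ) :
    coeff m (aeval ![z • X i, Q] (monomial d c))
      = z ^ (d 0) • (c * coeff m ((X i : MvPolynomial (Fin 2) O) ^ (d 0) * Q ^ (d 1))) := by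
  rw [monomial_fin2, map_mul, map_mul, map_pow, map_pow, aeval_C, aeval_X, aeval_X,
    Matrix.cons_val_zero, Matrix.cons_val_one, Matrix.cons_val_zero, algebraMap_eq,
    smul_pow, mul_smul_comm, smul_mul_assoc, coeff_smul, mul_assoc, coeff_C_mul,
]

lemma matAct_matAct (γ δ : Matrix (Fin 2) (Fin 2) ℤ) (P : MvPolynomial (Fin 2) O) :
    matAct δ (matAct γ P) = matAct (γ * δ) P := by
  have h0 : (aeval (![δ 1 1 • X 0 - δ 1 0 • X 1, -(δ 0 1 • X 0) + δ 0 0 • X 1] :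
        Fin 2 → MvPolynomial (Fin 2) O))
      ((![γ 1 1 • X 0 - γ 1 0 • X 1, -(γ 0 1 • X 0) + γ 0 0 • X 1] :
        Fin 2 → MvPolynomial (Fin 2) O) 0)
      = (γ * δ) 1 1 • X 0 - (γ * δ) 1 0 • X 1 := by
    simp only [Matrix.cons_val_zero, Matrix.cons_val_one, Matrix.head_cons,
      map_sub, map_add, map_neg, map_zsmul, aeval_X, Matrix.mul_apply,
      Fin.sum_univ_two, Fin.isValue]
    module
  have h1 : (aeval (![δ 1 1 • X 0 - δ 1 0 • X 1, -(δ 0 1 • X 0) + δ 0 0 • X 1] :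
        Fin 2 → MvPolynomial (Fin 2) O))
      ((![γ 1 1 • X 0 - γ 1 0 • X 1, -(γ 0 1 • X 0) + γ 0 0 • X 1] :
        Fin 2 → MvPolynomial (Fin 2) O) 1)
      = -((γ * δ) 0 1 • X 0) + (γ * δ) 0 0 • X 1 := by
    simp only [Matrix.cons_val_zero, Matrix.cons_val_one, Matrix.head_cons,
      map_sub, map_add, map_neg, map_zsmul, aeval_X, Matrix.mul_apply,
      Fin.sum_univ_two, Fin.isValue]
    module
  unfold matAct
  rw [comp_aeval_apply,
    show (fun i => (aeval (![δ 1 1 • X 0 - δ 1 0 • X 1, -(δ 0 1 • X 0) + δ 0 0 • X 1] :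
        Fin 2 → MvPolynomial (Fin 2) O))
      ((![γ 1 1 • X 0 - γ 1 0 • X 1, -(γ 0 1 • X 0) + γ 0 0 • X 1] :
        Fin 2 → MvPolynomial (Fin 2) O) i))
      = ![(γ * δ) 1 1 • X 0 - (γ * δ) 1 0 • X 1,
          -((γ * δ) 0 1 • X 0) + (γ * δ) 0 0 • X 1] from funext fun i => by
      fin_cases i
      · exact h0
      · exact h1]

lemma matAct_smul (γ : Matrix (Fin 2) (Fin 2) ℤ) (c : O) (P : MvPolynomial (Fin 2) O) :
    matAct γ (c • P) = c • matAct γ P := by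
  unfold matAct; exact map_smul _ c P

lemma degDiv_mapDomain (f : Option ℚ → Option ℚ) (D : Option ℚ →₀ ℤ) :
    degDiv (Finsupp.mapDomain f D) = degDiv D :=
  Finsupp.sum_mapDomain_index (fun _ => rfl) (fun _ _ _ => rfl)

lemma v_pow_p (v : AddValuation O (WithTop ℚ)) (p : ℕ) (hvp : v (p : O) = 1) (n : ℕ) :
    v ((p : O) ^ n) = (n : WithTop ℚ) := by
  induction n with
  | zero => simpa using v.map_one
  | succ k ih =>
      rw [pow_succ, v.map_mul, ih, hvp]
      push_cast
      ring

lemma vge_matAct_fil (v : AddValuation O (WithTop ℚ)) (p g r : ℕ)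
    (hvp : v (p : O) = 1) (hnn : ∀ x : O, 0 ≤ v x)
    (γ : Matrix (Fin 2) (Fin 2) ℤ) (h10 : γ 1 0 = 0) (h11 : γ 1 1 = (p : ℤ))
    (P : MvPolynomial (Fin 2) O) (hP : P.IsHomogeneous g) (hF : inFil O p g r P)
    (m : Fin 2 →₀ ℕ) : (r : WithTop ℚ) ≤ v (coeff m (matAct γ P)) := by
  unfold matAct
  rw [show (![γ 1 1 • X 0 - γ 1 0 • X 1, -(γ 0 1 • X 0) + γ 0 0 • X 1] :
      Fin 2 → MvPolynomial (Fin 2) O)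
      = ![(p : ℤ) • X 0, -(γ 0 1 • X 0) + γ 0 0 • X 1] by
    rw [h10, h11]; simp]
  rw [P.as_sum, map_sum, coeff_sum]
  refine v.map_le_sum fun d hd => ?_
  rw [coeff_aeval_core, zsmul_eq_mul]
  have hcast : (((p : ℤ) ^ (d 0) : ℤ) : O) = (p : O) ^ (d 0) := by push_cast; ring
  rw [hcast, v.map_mul, v.map_mul, v_pow_p v p hvp]
  have hdeg : d 0 + d 1 = g := by
    have hcne : coeff d P ≠ 0 := mem_support_iff.mp hd
    have hdg : d.degree = g := by
      by_contra hne
      exact hcne (hP.coeff_eq_zero hne)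
    rw [degree_fin2] at hdg
    exact hdg
  by_cases hlt : d 0 < r
  · have hdvd := hF (d 0) hlt
    rw [show (g - d 0) = d 1 by omega, ← fin2_eq d] at hdvd
    obtain ⟨c', hc'⟩ := hdvd
    have hvc : ((r - d 0 : ℕ) : WithTop ℚ) ≤ v (coeff d P) := by
      rw [hc', v.map_mul, v_pow_p v p hvp]
      exact le_add_of_nonneg_right (hnn c')
    have hsplit : ((d 0 : ℕ) : WithTop ℚ) + ((r - d 0 : ℕ) : WithTop ℚ) = (r : WithTop ℚ) := by
      rw [← Nat.cast_add]
      congr 1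
      omega
    rw [← hsplit]
    exact add_le_add_right (hvc.trans (le_add_of_nonneg_right (hnn _))) _
  · push_neg at hlt
    exact le_trans (Nat.mono_cast hlt) (le_add_of_nonneg_right (add_nonneg (hnn _) (hnn _)))

lemma vge_matAct_anti (v : AddValuation O (WithTop ℚ)) (hnn : ∀ x : O, 0 ≤ v x)
    (γ : Matrix (Fin 2) (Fin 2) ℤ) (h00 : γ 0 0 = 0) (h11 : γ 1 1 = 0)
    (t : WithTop ℚ) (P : MvPolynomial (Fin 2) O)
    (hP : ∀ m, t ≤ v (coeff m P)) (m : Fin 2 →₀ ℕ) :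
    t ≤ v (coeff m (matAct γ P)) := by
  unfold matAct
  rw [show (![γ 1 1 • X 0 - γ 1 0 • X 1, -(γ 0 1 • X 0) + γ 0 0 • X 1] :
      Fin 2 → MvPolynomial (Fin 2) O)
      = ![(-(γ 1 0)) • X 1, (-(γ 0 1)) • X 0] by
    rw [h00, h11]
    funext i
    fin_cases i <;> simp [neg_smul]]
  rw [P.as_sum, map_sum, coeff_sum]
  refine v.map_le_sum fun d hd => ?_
  rw [coeff_aeval_core, zsmul_eq_mul, v.map_mul, v.map_mul]
  exact le_trans (le_trans (hP d) (le_add_of_nonneg_right (hnn _)))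
    (le_add_of_nonneg_left (hnn _))

end Aux

/-- Let `φ` be a `Γ_0(N)`-invariant `V_g(O)`-valued modular symbol (`p ∤ N`) which is a
`T_p`-eigensymbol with eigenvalue `lam`, takes all its values in `Fil^r(V_g(O))`,
satisfies the functional equation `φ|[[0,-1],[N,0]] = u·φ` with `u ∈ O^× · N^{g/2}`,
and has `‖φ‖ = 1` (all values integral, some coefficient a unit).  Then
`ord_p(lam) ≥ r`. -/
theorem slope_ge_of_fil (p N g r : ℕ) (hp : p.Prime) (hodd : Odd p) (hpN : ¬ p ∣ N)
    (hgeven : Even g)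
    (O : Type*) [CommRing O] [IsDomain O]
    (v : AddValuation O (WithTop ℚ)) (hvp : v (p : O) = 1) (hnn : ∀ x : O, 0 ≤ v x)
    (hvtop : ∀ x : O, v x = ⊤ ↔ x = 0)
    (φ : (Option ℚ →₀ ℤ) → MvPolynomial (Fin 2) O)
    (hhom : ∀ D, (φ D).IsHomogeneous g)
    (hadd : ∀ D D', degDiv D = 0 → degDiv D' = 0 → φ (D + D') = φ D + φ D')
    (hinv : ∀ γ : Matrix (Fin 2) (Fin 2) ℤ, γ.det = 1 → (N : ℤ) ∣ γ 1 0 →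
      ∀ D, degDiv D = 0 → matAct γ (φ (Finsupp.mapDomain (moeb γ) D)) = φ D)
    (lam : O)
    (heig : ∀ D, degDiv D = 0 →
      (∑ a ∈ Finset.range p, matAct !![1, (a : ℤ); 0, (p : ℤ)]
          (φ (Finsupp.mapDomain (moeb !![1, (a : ℤ); 0, (p : ℤ)]) D)))
        + matAct !![(p : ℤ), 0; 0, 1]
            (φ (Finsupp.mapDomain (moeb !![(p : ℤ), 0; 0, 1]) D))
      = lam • φ D)
    (hfil : ∀ D, degDiv D = 0 → inFil O p g r (φ D))
    (u : O) (hu : ∃ w : Oˣ, u = (w : O) * (N : O) ^ (g / 2))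
    (hFE : ∀ D, degDiv D = 0 →
      matAct !![0, -1; (N : ℤ), 0] (φ (Finsupp.mapDomain (moeb !![0, -1; (N : ℤ), 0]) D))
        = u • φ D)
    (hnorm : ∃ D, degDiv D = 0 ∧ ∃ m : (Fin 2) →₀ ℕ, v (MvPolynomial.coeff m (φ D)) = 0) :
    (r : WithTop ℚ) ≤ v lam := by
  classical
  obtain ⟨D, hD0, m, hm⟩ := hnorm
  obtain ⟨wu, hwu⟩ := hu
  have hvwu : v (wu : O) = 0 := by
    have h := v.map_mul (wu : O) ((wu⁻¹ : Oˣ) : O)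
    rw [Units.mul_inv, v.map_one] at h
    exact le_antisymm (h ▸ le_add_of_nonneg_right (hnn _)) (hnn _)
  have hcop : IsCoprime (p : ℤ) (N : ℤ) := by
    rw [Int.isCoprime_iff_gcd_eq_one]
    simpa using (Nat.Prime.coprime_iff_not_dvd hp).mpr hpN
  obtain ⟨aZ, bZ, hab⟩ := hcop
  have habO : (aZ : O) * (p : O) + (bZ : O) * (N : O) = 1 := by
    have := congrArg (fun z : ℤ => (z : O)) hab
    push_cast at this
    exact_mod_cast this
  have hvN : v (N : O) = 0 := by
    have hmin := v.map_add ((aZ : O) * (p : O)) ((bZ : O) * (N : O))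
    rw [habO, v.map_one] at hmin
    have hap : (0 : WithTop ℚ) < v ((aZ : O) * (p : O)) := by
      rw [v.map_mul, hvp]
      exact lt_of_lt_of_le zero_lt_one (le_add_of_nonneg_left (hnn _))
    have hbN : v ((bZ : O) * (N : O)) ≤ 0 := by
      rcases min_le_iff.mp hmin with h | h
      · exact absurd h (not_le.mpr hap)
      · exact h
    rw [v.map_mul] at hbN
    refine le_antisymm ?_ (hnn _)
    calc v (N : O) = 0 + v (N : O) := (zero_add _).symm
      _ ≤ v (bZ : O) + v (N : O) := add_le_add_left (hnn _) _
      _ ≤ 0 := hbN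
  have hvu : v u = 0 := by
    rw [hwu, v.map_mul, hvwu, zero_add, v.map_pow, hvN, smul_zero]
  set D' := Finsupp.mapDomain (moeb !![(p : ℤ), 0; 0, 1]) D with hD'def
  have hD'0 : degDiv D' = 0 := by
    rw [hD'def]
    exact (degDiv_mapDomain _ _).trans hD0
  set E := Finsupp.mapDomain (moeb !![0, -1; (N : ℤ), 0]) D' with hEdef
  have hE0 : degDiv E = 0 := by
    rw [hEdef]
    exact (degDiv_mapDomain _ _).trans hD'0
  have hfe := hFE D' hD'0
  have hcomm : (!![0, -1; (N : ℤ), 0] * !![(p : ℤ), 0; 0, 1]) =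
      (!![1, 0; 0, (p : ℤ)] * !![0, -1; (N : ℤ), 0]) := by
    ext i j
    fin_cases i <;> fin_cases j <;>
      simp [Matrix.mul_apply, Fin.sum_univ_two, mul_comm]
  have step : u • matAct !![(p : ℤ), 0; 0, 1] (φ D')
      = matAct !![0, -1; (N : ℤ), 0] (matAct !![1, 0; 0, (p : ℤ)] (φ E)) := by
    rw [← matAct_smul, ← hfe, matAct_matAct, matAct_matAct, hcomm]
  have hmid : ∀ m', (r : WithTop ℚ) ≤
      v (MvPolynomial.coeff m' (matAct !![1, 0; 0, (p : ℤ)] (φ E))) :=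
    fun m' => vge_matAct_fil v p g r hvp hnn (!![1, 0; 0, (p : ℤ)]) (by simp) (by simp)
      (φ E) (hhom E) (hfil E hE0) m'
  have hlast : ∀ m', (r : WithTop ℚ) ≤
      v (MvPolynomial.coeff m' (matAct !![(p : ℤ), 0; 0, 1] (φ D'))) := by
    intro m'
    have h2 := vge_matAct_anti v hnn (!![0, -1; (N : ℤ), 0]) (by simp) (by simp)
      ((r : ℕ) : WithTop ℚ) (matAct !![1, 0; 0, (p : ℤ)] (φ E)) hmid m'
    rw [← step, MvPolynomial.coeff_smul, smul_eq_mul, v.map_mul, hvu, zero_add] at h2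
    exact h2
  have heq := heig D hD0
  have hmain : (r : WithTop ℚ) ≤ v (MvPolynomial.coeff m (lam • φ D)) := by
    rw [← heq, MvPolynomial.coeff_add]
    refine v.map_le_add ?_ (hlast m)
    rw [MvPolynomial.coeff_sum]
    refine v.map_le_sum fun a' _ => ?_
    exact vge_matAct_fil v p g r hvp hnn (!![1, (a' : ℤ); 0, (p : ℤ)]) (by simp) (by simp)
      (φ (Finsupp.mapDomain (moeb !![1, (a' : ℤ); 0, (p : ℤ)]) D)) (hhom _)
      (hfil _ ((degDiv_mapDomain _ _).trans hD0)) m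
  rw [MvPolynomial.coeff_smul, smul_eq_mul, v.map_mul, hm, add_zero] at hmain
  exact hmain
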